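/- Let lg denote the function lg t = max{log₂ t, 0} on the reals. Let x, y, u, M be real numbers with x > 0, y > 0, and 0 ≤ u ≤ M. Then lg(lg((x + y + M)/y)) − lg(lg((y + M)/y)) ≤ 2·log₂((x + y + u)/(y + u)). -/
import Mathlib


/-- `lg t = max (log₂ t) 0`. -/
noncomputable def lg (t : ℝ) : ℝ := max (Real.logb 2 t) 0

lemma logb_le_two_mul_sub_one {t : ℝ} (ht : 1 ≤ t) : Real.logb 2 t ≤ 2 * (t - 1) := by
  have h2 : (1:ℝ)/2 ≤ Real.log 2 := by
    have := Real.log_two_gt_d9; linarith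
  have h2' : (0:ℝ) < Real.log 2 := by linarith
  have hlog : Real.log t ≤ t - 1 := Real.log_le_sub_one_of_pos (by linarith)
  rw [Real.logb, div_le_iff₀ h2']
  nlinarith

lemma lg_lg_core {a b : ℝ} (hb : 1 ≤ b) (hab : b ≤ a) :
    lg (lg a) - lg (lg b) ≤ 2 * (Real.logb 2 a - Real.logb 2 b) := by
  have ha : 1 ≤ a := le_trans hb hab
  have hA : 0 ≤ Real.logb 2 a := Real.logb_nonneg (by norm_num) ha
  have hB : 0 ≤ Real.logb 2 b := Real.logb_nonneg (by norm_num) hb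
  have hBA : Real.logb 2 b ≤ Real.logb 2 a :=
    Real.logb_le_logb_of_le (by norm_num) (by linarith) hab
  set A := Real.logb 2 a with hAdef
  set B := Real.logb 2 b with hBdef
  have hlga : lg a = A := max_eq_left hA
  have hlgb : lg b = B := max_eq_left hB
  rw [hlga, hlgb]
  unfold lg
  rcases le_or_gt A 1 with h1 | h1
  · have : Real.logb 2 A ≤ 0 := Real.logb_nonpos (by norm_num) hA h1
    have h0 : max (Real.logb 2 A) 0 = 0 := max_eq_right this
    rw [h0]
    have : (0:ℝ) ≤ max (Real.logb 2 B) 0 := le_max_right _ _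
    linarith
  · rcases le_or_gt B 1 with h2 | h2
    · have : Real.logb 2 B ≤ 0 := Real.logb_nonpos (by norm_num) hB h2
      have h0 : max (Real.logb 2 B) 0 = 0 := max_eq_right this
      rw [h0]
      have hmA : max (Real.logb 2 A) 0 = Real.logb 2 A :=
        max_eq_left (Real.logb_nonneg (by norm_num) h1.le)
      rw [hmA]
      have := logb_le_two_mul_sub_one h1.le
      linarith
    · have hmA : max (Real.logb 2 A) 0 = Real.logb 2 A :=
        max_eq_left (Real.logb_nonneg (by norm_num) h1.le)
      have hmB : max (Real.logb 2 B) 0 = Real.logb 2 B :=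
        max_eq_left (Real.logb_nonneg (by norm_num) h2.le)
      rw [hmA, hmB]
      have hdiv : Real.logb 2 A - Real.logb 2 B = Real.logb 2 (A / B) := by
        rw [Real.logb_div (by linarith) (by linarith)]
      have h1AB : 1 ≤ A / B := (one_le_div (by linarith)).2 hBA
      have hkey : Real.logb 2 (A / B) ≤ 2 * (A / B - 1) := logb_le_two_mul_sub_one h1AB
      have hdb : A / B - 1 ≤ A - B := by
        rw [div_sub_one (by linarith : B ≠ 0), div_le_iff₀ (by linarith : (0:ℝ) < B)]
        nlinarith
      linarith [hdiv ▸ hkey]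

/-- Computational core of Lemma 7.9: for reals `x > 0`, `y > 0`, `0 ≤ u ≤ M`,
`lg lg ((x+y+M)/y) − lg lg ((y+M)/y) ≤ 2·log₂((x+y+u)/(y+u))`. -/
theorem stmt_14 (x y u M : ℝ) (hx : 0 < x) (hy : 0 < y) (hu : 0 ≤ u) (huM : u ≤ M) :
    lg (lg ((x + y + M) / y)) - lg (lg ((y + M) / y)) ≤
      2 * Real.logb 2 ((x + y + u) / (y + u)) := by
  have hM : 0 ≤ M := le_trans hu huM
  have hyM : 0 < y + M := by linarith
  have hyu : 0 < y + u := by linarith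
  have hb1 : 1 ≤ (y + M) / y := (one_le_div hy).2 (by linarith)
  have hba : (y + M) / y ≤ (x + y + M) / y := by
    apply div_le_div_of_nonneg_right (by linarith) hy.le
  have hcore := lg_lg_core hb1 hba
  have hlogdiff : Real.logb 2 ((x + y + M) / y) - Real.logb 2 ((y + M) / y)
      = Real.logb 2 ((x + y + M) / (y + M)) := by
    rw [Real.logb_div (by positivity) (by positivity),
        Real.logb_div (by positivity) (by positivity),
        Real.logb_div (by positivity) (by positivity)]
    ring
  have hmono : Real.logb 2 ((x + y + M) / (y + M)) ≤ Real.logb 2 ((x + y + u) / (y + u)) := by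
    apply Real.logb_le_logb_of_le (by norm_num) (by positivity)
    rw [div_le_div_iff₀ hyM hyu]
    nlinarith
  calc lg (lg ((x + y + M) / y)) - lg (lg ((y + M) / y))
      ≤ 2 * (Real.logb 2 ((x + y + M) / y) - Real.logb 2 ((y + M) / y)) := hcore
    _ = 2 * Real.logb 2 ((x + y + M) / (y + M)) := by rw [hlogdiff]
    _ ≤ 2 * Real.logb 2 ((x + y + u) / (y + u)) := by linarith
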